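/- Suppose A is an associative (noncommutative) ring and T_{11}, T_{12}, T_{21}, T_{22} : ℂ → A are operator-valued functions satisfying the gl(2) RTT relations for the rational R-matrix R(u,v) = 1 + g(u,v)P. Then the transfer matrix t(u) = T_{11}(u) + T_{22}(u) satisfies [t(u), t(v)] = 0 for all u ≠ v. -/
import Mathlib


namespace Stmt12

/-- The permutation operator `P` on `ℂ²⊗ℂ²`, written as a matrix indexed by
`Fin 2 × Fin 2`. -/
def P : Matrix (Fin 2 × Fin 2) (Fin 2 × Fin 2) ℂ :=
  fun p q => if p.1 = q.2 ∧ p.2 = q.1 then 1 else 0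

/-- The rational `gl(2)` R-matrix `R(u,v) = 1 + g(u,v)·P` with `g(u,v) = c/(u-v)`. -/
noncomputable def R (c u v : ℂ) : Matrix (Fin 2 × Fin 2) (Fin 2 × Fin 2) ℂ :=
  1 + (c / (u - v)) • P

/-- `T⁽¹⁾ = T ⊗ 1`. -/
def T1 {A : Type*} [Ring A] (T : Matrix (Fin 2) (Fin 2) A) :
    Matrix (Fin 2 × Fin 2) (Fin 2 × Fin 2) A :=
  fun p q => if p.2 = q.2 then T p.1 q.1 else 0

/-- `T⁽²⁾ = 1 ⊗ T`. -/
def T2 {A : Type*} [Ring A] (T : Matrix (Fin 2) (Fin 2) A) :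
    Matrix (Fin 2 × Fin 2) (Fin 2 × Fin 2) A :=
  fun p q => if p.1 = q.1 then T p.2 q.2 else 0

/-- If the operator-valued monodromy matrix `T(u)` satisfies the RTT relation
`R(u,v)·T⁽¹⁾(u)·T⁽²⁾(v) = T⁽²⁾(v)·T⁽¹⁾(u)·R(u,v)` for the rational R-matrix,
then the transfer matrices `t(u) = T₁₁(u) + T₂₂(u)` commute: `[t(u),t(v)] = 0`. -/
theorem transfer_matrices_commute {A : Type*} [Ring A] [Algebra ℂ A]
    (c : ℂ) (hc : c ≠ 0) (T : ℂ → Matrix (Fin 2) (Fin 2) A)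
    (hRTT : ∀ u v : ℂ, u ≠ v →
      (R c u v).map (algebraMap ℂ A) * T1 (T u) * T2 (T v) =
        T2 (T v) * T1 (T u) * (R c u v).map (algebraMap ℂ A)) :
    ∀ u v : ℂ, u ≠ v →
      (T u 0 0 + T u 1 1) * (T v 0 0 + T v 1 1) =
        (T v 0 0 + T v 1 1) * (T u 0 0 + T u 1 1) := by
  intro u v huv
  have h1 := hRTT u v huv
  have h2 := hRTT v u huv.symm
  have e1 := congrArg (fun m => m ((0:Fin 2),(0:Fin 2)) ((0:Fin 2),(0:Fin 2))) h1
  have e2 := congrArg (fun m => m ((0:Fin 2),(1:Fin 2)) ((0:Fin 2),(1:Fin 2))) h1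
  have e3 := congrArg (fun m => m ((1:Fin 2),(0:Fin 2)) ((1:Fin 2),(0:Fin 2))) h1
  have e4 := congrArg (fun m => m ((1:Fin 2),(1:Fin 2)) ((1:Fin 2),(1:Fin 2))) h1
  have f1 := congrArg (fun m => m ((0:Fin 2),(0:Fin 2)) ((0:Fin 2),(0:Fin 2))) h2
  have f2 := congrArg (fun m => m ((0:Fin 2),(1:Fin 2)) ((0:Fin 2),(1:Fin 2))) h2
  have f3 := congrArg (fun m => m ((1:Fin 2),(0:Fin 2)) ((1:Fin 2),(0:Fin 2))) h2
  have f4 := congrArg (fun m => m ((1:Fin 2),(1:Fin 2)) ((1:Fin 2),(1:Fin 2))) h2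
  simp only [Matrix.mul_apply, Fintype.sum_prod_type, Fin.sum_univ_two, Matrix.map_apply,
    R, P, T1, T2, Matrix.one_apply, Matrix.add_apply, Matrix.smul_apply, Prod.mk.injEq]
    at e1 e2 e3 e4 f1 f2 f3 f4
  norm_num at e1 e2 e3 e4 f1 f2 f3 f4
  have hg : (algebraMap ℂ A) (c / (v - u)) = -((algebraMap ℂ A) (c / (u - v))) := by
    rw [show v - u = -(u - v) by ring, div_neg, map_neg]
  rw [hg] at f1 f2 f3 f4
  have hG : ∀ x : A, x * (algebraMap ℂ A (c / (u - v))) = (algebraMap ℂ A (c / (u - v))) * x :=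
    fun x => (Algebra.commutes _ x).symm
  have hG2 : ∀ x y : A, x * ((algebraMap ℂ A (c / (u - v))) * y)
      = (algebraMap ℂ A (c / (u - v))) * (x * y) := by
    intro x y; rw [← mul_assoc, hG x, mul_assoc]
  simp only [add_mul, mul_add, mul_one, one_mul, mul_neg, neg_mul, mul_assoc, hG, hG2]
    at e1 e2 e3 e4 f1 f2 f3 f4
  have key : (T u 0 0 + T u 1 1) * (T v 0 0 + T v 1 1)
      + (T u 0 0 + T u 1 1) * (T v 0 0 + T v 1 1)
      = (T v 0 0 + T v 1 1) * (T u 0 0 + T u 1 1)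
      + (T v 0 0 + T v 1 1) * (T u 0 0 + T u 1 1) := by
    linear_combination (norm := noncomm_ring) e1 + e2 + e3 + e4 - f1 - f2 - f3 - f4
  calc (T u 0 0 + T u 1 1) * (T v 0 0 + T v 1 1)
      = (2:ℂ)⁻¹ • ((T u 0 0 + T u 1 1) * (T v 0 0 + T v 1 1)
          + (T u 0 0 + T u 1 1) * (T v 0 0 + T v 1 1)) := by
        rw [← two_smul ℂ, smul_smul]; norm_num
    _ = (2:ℂ)⁻¹ • ((T v 0 0 + T v 1 1) * (T u 0 0 + T u 1 1)
          + (T v 0 0 + T v 1 1) * (T u 0 0 + T u 1 1)) := by rw [key]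
    _ = (T v 0 0 + T v 1 1) * (T u 0 0 + T u 1 1) := by
        rw [← two_smul ℂ, smul_smul]; norm_num


end Stmt12
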